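/- Fix an integer r ≥ 2 and define, for g ≥ 0, n ≥ 1 with 2g−2+n > 0 and a_1, …, a_n ∈ {0, …, r−2}, the number ω_{g,n}(a_1, …, a_n) = (r/2)^{g−1} Σ_{k=1}^{r−1} (−1)^{(k−1)(g−1)} ∏_{i=1}^n sin((a_i+1)kπ/r) / sin(kπ/r)^{2g−2+n}. Then for all g ≥ 1 (with 2(g−1)−2+(n+2) > 0), ω_{g,n}(a_1, …, a_n) = Σ_{a=0}^{r−2} ω_{g−1, n+2}(a_1, …, a_n, a, r−2−a). -/

import Mathlib

open Real Finset

lemma cos_sum_zero (r k : ℕ) (hr : 2 ≤ r) (hk1 : 1 ≤ k) (hk2 : k ≤ r - 1) :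
    ∑ j ∈ Finset.range r, Real.cos (2 * π * k * j / r) = 0 := by
  have hr0 : (r : ℝ) ≠ 0 := Nat.cast_ne_zero.mpr (by omega)
  set ζ : ℂ := Complex.exp (2 * π * k / r * Complex.I) with hζdef
  have hpow : ∀ j : ℕ, ζ ^ j = Complex.exp ((2 * π * k * j / r : ℝ) * Complex.I) := by
    intro j
    rw [hζdef, ← Complex.exp_nat_mul]
    congr 1
    push_cast
    ring
  have hζ1 : ζ ≠ 1 := by
    intro h
    rw [hζdef, Complex.exp_eq_one_iff] at h
    obtain ⟨m, hm⟩ := h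
    have h2 : ((2 * π * k / r : ℝ) : ℂ) * Complex.I = ((m : ℝ) * (2 * π) : ℝ) * Complex.I := by
      push_cast
      linear_combination hm
    have h3 : (2 * π * k / r : ℝ) = (m : ℝ) * (2 * π) := by
      have := mul_right_cancel₀ Complex.I_ne_zero h2
      exact_mod_cast this
    have hπ : (0:ℝ) < π := Real.pi_pos
    have h4 : (k : ℝ) = (m : ℝ) * r := by
      field_simp at h3
      nlinarith [h3]
    have h5 : (k : ℤ) = m * r := by exact_mod_cast h4
    rcases le_or_gt m 0 with hm0 | hm0
    · have : (m : ℤ) * r ≤ 0 := mul_nonpos_of_nonpos_of_nonneg hm0 (by positivity)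
      omega
    · have : (1:ℤ) * r ≤ m * r := by
        apply mul_le_mul_of_nonneg_right (by omega) (by positivity)
      simp at this
      omega
  have hζr : ζ ^ r = 1 := by
    rw [hpow r]
    have h1 : (2 * π * k * r / r : ℝ) = ((k:ℤ) : ℝ) * (2 * π) := by
      rw [mul_div_assoc, div_self hr0, mul_one]
      push_cast
      ring
    rw [h1]
    have h2 : ((((k:ℤ):ℝ) * (2 * π) : ℝ) : ℂ) * Complex.I = (k:ℤ) * (2 * π * Complex.I) := by
      push_cast
      ring
    rw [h2, Complex.exp_int_mul_two_pi_mul_I]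
  have hsum : ∑ j ∈ Finset.range r, ζ ^ j = 0 := by
    rw [geom_sum_eq hζ1, hζr]
    simp
  calc ∑ j ∈ Finset.range r, Real.cos (2 * π * k * j / r)
      = (∑ j ∈ Finset.range r, ζ ^ j).re := by
        rw [Complex.re_sum]
        refine Finset.sum_congr rfl fun j _ => ?_
        rw [hpow j, Complex.exp_ofReal_mul_I_re]
    _ = 0 := by rw [hsum]; simp

lemma sum_sin_sq (r k : ℕ) (hr : 2 ≤ r) (hk1 : 1 ≤ k) (hk2 : k ≤ r - 1) :
    ∑ b ∈ Finset.range (r - 1), Real.sin (((b:ℝ) + 1) * k * π / r) ^ 2 = r / 2 := by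
  obtain ⟨s, rfl⟩ : ∃ s, r = s + 1 := ⟨r - 1, by omega⟩
  have key := cos_sum_zero (s+1) k hr hk1 hk2
  rw [Finset.sum_range_succ'] at key
  simp only [Nat.add_sub_cancel] at *
  have key' : ∑ b ∈ Finset.range s, Real.cos (2 * π * k * ((b:ℝ)+1) / ((s:ℝ)+1)) = -1 := by
    have h0 : Real.cos (2 * π * k * ((0:ℕ):ℝ) / ((s+1:ℕ):ℝ)) = 1 := by
      norm_num
    push_cast at key h0 ⊢
    linarith [key]
  have hterm : ∀ b ∈ Finset.range s,
      Real.sin (((b:ℝ) + 1) * k * π / ((s+1:ℕ):ℝ)) ^ 2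
        = 1/2 - Real.cos (2 * π * k * ((b:ℝ)+1) / ((s:ℝ)+1)) / 2 := by
    intro b _
    rw [Real.sin_sq_eq_half_sub]
    have harg : 2 * (((b:ℝ) + 1) * k * π / ((s+1:ℕ):ℝ)) = 2 * π * k * ((b:ℝ)+1) / ((s:ℝ)+1) := by
      push_cast
      ring
    rw [harg]
  rw [Finset.sum_congr rfl hterm, Finset.sum_sub_distrib, Finset.sum_const, ← Finset.sum_div,
    key', Finset.card_range]
  push_cast
  ring

/-- The topological part of the shifted `r`-spin CohFT (Proposition 3.6):
`ω_{g,n}(a_1,…,a_n) = (r/2)^{g−1} Σ_{k=1}^{r−1}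
  (−1)^{(k−1)(g−1)} ∏_i sin((a_i+1)kπ/r) / sin(kπ/r)^{2g−2+n}`. -/
noncomputable def omegaR (r : ℕ) (g : ℤ) (n : ℕ) (a : Fin n → ℕ) : ℝ :=
  ((r : ℝ) / 2) ^ (g - 1) * ∑ k ∈ Finset.Icc 1 (r - 1),
    (-1 : ℝ) ^ (((k : ℤ) - 1) * (g - 1)) *
      (∏ i, Real.sin ((a i + 1) * k * π / r)) /
        (Real.sin (k * π / r)) ^ (2 * g - 2 + n)

theorem stmt_3 (r : ℕ) (hr : 2 ≤ r) (g : ℤ) (hg : 1 ≤ g) (n : ℕ) (hn : 1 ≤ n)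
    (hstab : 0 < 2 * (g - 1) - 2 + ((n : ℤ) + 2)) (a : Fin n → ℕ)
    (ha : ∀ i, a i ≤ r - 2) :
    omegaR r g n a =
      ∑ b ∈ Finset.range (r - 1),
        omegaR r (g - 1) (n + 2) (Fin.snoc (Fin.snoc a b) (r - 2 - b)) := by
  have hr0 : (r : ℝ) ≠ 0 := Nat.cast_ne_zero.mpr (by omega)
  simp only [omegaR]
  rw [← Finset.mul_sum, Finset.sum_comm]
  have hc : ((r:ℝ)/2) ^ (g - 1) = ((r:ℝ)/2) ^ (g - 1 - 1) * ((r:ℝ)/2) := by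
    rw [← zpow_add_one₀ (by simp [hr0] : ((r:ℝ)/2) ≠ 0)]
    congr 1
    ring
  rw [hc, mul_assoc]
  congr 1
  rw [Finset.mul_sum]
  refine Finset.sum_congr rfl fun k hk => ?_
  obtain ⟨hk1, hk2⟩ := Finset.mem_Icc.mp hk
  have hE : (2 * (g - 1) - 2 + ((n + 2 : ℕ) : ℤ)) = 2 * g - 2 + (n : ℤ) := by
    push_cast; ring
  have hterm : ∀ b ∈ Finset.range (r - 1),
      (-1 : ℝ) ^ (((k : ℤ) - 1) * (g - 1 - 1)) *
        (∏ i, Real.sin (((Fin.snoc (Fin.snoc a b) (r - 2 - b) : Fin (n+2) → ℕ) i + 1) * k * π / r)) /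
          (Real.sin (k * π / r)) ^ (2 * (g - 1) - 2 + ((n + 2 : ℕ) : ℤ))
      = ((-1 : ℝ) ^ (((k : ℤ) - 1) * (g - 1 - 1)) * (-1 : ℝ) ^ (k + 1) *
          (∏ i, Real.sin (((a i : ℝ) + 1) * k * π / r)) /
            (Real.sin (k * π / r)) ^ (2 * g - 2 + (n : ℤ))) *
          Real.sin (((b:ℝ) + 1) * k * π / r) ^ 2 := by
    intro b hb
    have hbr : b ≤ r - 2 := by have := Finset.mem_range.mp hb; omega
    have hcast : ((r - 2 - b : ℕ) : ℝ) = (r : ℝ) - 2 - (b : ℝ) := by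
      have h1 : (r - 2 - b) + (b + 2) = r := by omega
      have h2 := congrArg (Nat.cast (R := ℝ)) h1
      push_cast at h2
      linarith
    have hprod : (∏ i, Real.sin (((Fin.snoc (Fin.snoc a b) (r - 2 - b) : Fin (n+2) → ℕ) i + 1) * k * π / r))
        = (∏ i, Real.sin (((a i : ℝ) + 1) * k * π / r)) *
            Real.sin (((b:ℝ) + 1) * k * π / r) *
            Real.sin ((((r - 2 - b : ℕ) : ℝ) + 1) * k * π / r) := by
      rw [Fin.prod_univ_castSucc, Fin.prod_univ_castSucc]
      simp [Fin.snoc_castSucc, Fin.snoc_last]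
    have hflip : Real.sin ((((r - 2 - b : ℕ) : ℝ) + 1) * k * π / r)
        = (-1 : ℝ) ^ (k + 1) * Real.sin (((b:ℝ) + 1) * k * π / r) := by
      have harg : (((r - 2 - b : ℕ) : ℝ) + 1) * k * π / r
          = (((k:ℕ) : ℤ) : ℝ) * π - (((b:ℝ) + 1) * k * π / r) := by
        rw [hcast]
        push_cast
        field_simp
        ring
      rw [harg, Real.sin_int_mul_pi_sub, zpow_natCast, pow_succ]
      ring
    rw [hprod, hflip, hE]
    ring
  rw [Finset.sum_congr rfl hterm, ← Finset.mul_sum, sum_sin_sq r k hr hk1 hk2]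
  have hsign : (-1 : ℝ) ^ (((k : ℤ) - 1) * (g - 1 - 1)) * (-1 : ℝ) ^ (k + 1)
      = (-1 : ℝ) ^ (((k : ℤ) - 1) * (g - 1)) := by
    rw [← zpow_natCast (-1 : ℝ) (k + 1), ← zpow_add₀ (by norm_num : (-1:ℝ) ≠ 0),
      show ((k : ℤ) - 1) * (g - 1 - 1) + ((k + 1 : ℕ) : ℤ) = ((k : ℤ) - 1) * (g - 1) + 2 by
        push_cast; ring,
      zpow_add₀ (by norm_num : (-1:ℝ) ≠ 0)]
    norm_num
  rw [← hsign]
  ring
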